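/- Let T : (ℕ → A) → Set (ℕ → B) be a multivalued stream transformer all of whose values are nonempty and compact. Then T is weakly causal if and only if hausdorffDist (T f) (T g) ≤ dist f g for all f, g, and T is strongly causal if and only if there exists l with 0 < l < 1 such that hausdorffDist (T f) (T g) ≤ l * dist f g for all f, g. -/
import Mathlib


open Metric

/-- The prefix metric on streams: `dist f g = (1/2)^n` where `n` is the first index
at which `f` and `g` differ (Mathlib's `PiNat` distance). -/
noncomputable instance streamMetricSpace {A : Type*} : MetricSpace (ℕ → A) :=
  letI : TopologicalSpace A := ⊥
  haveI : DiscreteTopology A := ⟨rfl⟩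
  PiNat.metricSpace

/-- A multivalued stream transformer `T` is `δ`-causal if whenever two input streams agree
on all indices `< k`, the sets of restrictions to indices `< k + δ` of their output sets agree. -/
def IsCausal {A B : Type*} (δ : ℕ) (T : (ℕ → A) → Set (ℕ → B)) : Prop :=
  ∀ (k : ℕ) (f g : ℕ → A), (∀ i < k, f i = g i) →
    (fun (u : ℕ → B) (i : Fin (k + δ)) => u (i : ℕ)) '' T f =
      (fun (u : ℕ → B) (i : Fin (k + δ)) => u (i : ℕ)) '' T g

private lemma pinat_dist_cast {A : Type*} (x y : ℕ → A) :
    dist x y = @dist _ (PiNat.dist : Dist (∀ _ : ℕ, A)) x y := rfl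

private lemma stream_dist_le_pow {A : Type*} {x y : ℕ → A} {n : ℕ} :
    dist x y ≤ (1 / 2 : ℝ) ^ n ↔ ∀ i < n, x i = y i := by
  rw [pinat_dist_cast, ← PiNat.mem_cylinder_iff_dist_le]
  exact PiNat.mem_cylinder_iff

private lemma stream_apply_eq_of_dist_lt {A : Type*} {x y : ℕ → A} {n i : ℕ}
    (h : dist x y < (1 / 2 : ℝ) ^ n) (hi : i ≤ n) : x i = y i := by
  rw [pinat_dist_cast] at h
  exact PiNat.apply_eq_of_dist_lt h hi

private lemma aux_exists {B : Type*} {s t : Set (ℕ → B)} {n : ℕ}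
    (h : (fun (u : ℕ → B) (i : Fin n) => u (i : ℕ)) '' s ⊆
      (fun (u : ℕ → B) (i : Fin n) => u (i : ℕ)) '' t) :
    ∀ u ∈ s, ∃ v ∈ t, dist u v ≤ (1 / 2 : ℝ) ^ n := by
  intro u hu
  obtain ⟨v, hv, hveq⟩ := h (Set.mem_image_of_mem _ hu)
  exact ⟨v, hv, stream_dist_le_pow.2 fun i hi =>
    (congrFun hveq (⟨i, hi⟩ : Fin n) : v i = u i).symm⟩

private lemma causal_bound {A B : Type*} {T : (ℕ → A) → Set (ℕ → B)}
    {δ : ℕ} (hc : IsCausal δ T) (f g : ℕ → A) :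
    hausdorffDist (T f) (T g) ≤ (1 / 2 : ℝ) ^ δ * dist f g := by
  rcases eq_or_ne f g with rfl | hfg
  · simp [hausdorffDist_self_zero]
  · set k := PiNat.firstDiff f g with hk
    have hagree : ∀ i < k, f i = g i := fun i hi => PiNat.apply_eq_of_lt_firstDiff hi
    have hdf : dist f g = (1 / 2 : ℝ) ^ k := by
      rw [pinat_dist_cast]; exact PiNat.dist_eq_of_ne hfg
    have him := hc k f g hagree
    have hpow : (1 / 2 : ℝ) ^ δ * (1 / 2 : ℝ) ^ k = (1 / 2 : ℝ) ^ (k + δ) := by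
      rw [← pow_add, add_comm]
    rw [hdf, hpow]
    exact hausdorffDist_le_of_mem_dist (by positivity)
      (aux_exists him.le) (aux_exists him.ge)

private lemma exists_close {A B : Type*} {T : (ℕ → A) → Set (ℕ → B)}
    (hne : ∀ f, (T f).Nonempty) (hcomp : ∀ f, IsCompact (T f))
    {l : ℝ} (hb : ∀ f g, hausdorffDist (T f) (T g) ≤ l * dist f g)
    (f g : ℕ → A) (u : ℕ → B) (hu : u ∈ T f) :
    ∃ v ∈ T g, dist u v ≤ l * dist f g := by
  have hne_top : EMetric.hausdorffEdist (T f) (T g) ≠ ⊤ :=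
    hausdorffEdist_ne_top_of_nonempty_of_bounded (hne f) (hne g)
      (hcomp f).isBounded (hcomp g).isBounded
  obtain ⟨v, hv, hd⟩ := (hcomp g).exists_infDist_eq_dist (hne g) u
  exact ⟨v, hv, by rw [← hd]; exact (infDist_le_hausdorffDist_of_mem hu hne_top).trans (hb f g)⟩

/-- A stream transformer with nonempty compact values is weakly causal iff it is Lipschitz
nonexpansive, and strongly causal iff it is Lipschitz contractive (Hausdorff distance). -/
theorem causality_contraction_connection_lipschitz {A B : Type*}
    (T : (ℕ → A) → Set (ℕ → B)) (hne : ∀ f, (T f).Nonempty)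
    (hcomp : ∀ f, IsCompact (T f)) :
    (IsCausal 0 T ↔ ∀ f g : ℕ → A, hausdorffDist (T f) (T g) ≤ dist f g) ∧
      ((∃ δ : ℕ, 1 ≤ δ ∧ IsCausal δ T) ↔
        ∃ l : ℝ, 0 < l ∧ l < 1 ∧ ∀ f g : ℕ → A, hausdorffDist (T f) (T g) ≤ l * dist f g) := by
  constructor
  · constructor
    · intro hc f g
      simpa using causal_bound hc f g
    · intro hb k f g hagree
      have hb' : ∀ f g : ℕ → A, hausdorffDist (T f) (T g) ≤ 1 * dist f g := by
        intro f g; simpa using hb f g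
      have main : ∀ f g : ℕ → A, (∀ i < k, f i = g i) →
          (fun (u : ℕ → B) (i : Fin (k + 0)) => u (i : ℕ)) '' T f ⊆
            (fun (u : ℕ → B) (i : Fin (k + 0)) => u (i : ℕ)) '' T g := by
        rintro f g hag _ ⟨u, hu, rfl⟩
        obtain ⟨v, hv, hd⟩ := exists_close hne hcomp hb' f g u hu
        have hdk : dist u v ≤ (1 / 2 : ℝ) ^ k := by
          calc dist u v ≤ 1 * dist f g := hd
          _ = dist f g := one_mul _
          _ ≤ (1 / 2 : ℝ) ^ k := stream_dist_le_pow.2 hag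
        refine ⟨v, hv, funext fun i => ?_⟩
        exact (stream_dist_le_pow.1 hdk i (by omega : (i : ℕ) < k)).symm
      exact Set.Subset.antisymm (main f g hagree)
        (main g f fun i hi => (hagree i hi).symm)
  · constructor
    · rintro ⟨δ, hδ, hc⟩
      refine ⟨(1 / 2 : ℝ) ^ δ, by positivity,
        pow_lt_one₀ (by norm_num) (by norm_num) (by omega), fun f g => causal_bound hc f g⟩
    · rintro ⟨l, hl0, hl1, hb⟩
      refine ⟨1, le_refl 1, ?_⟩
      intro k f g hagree
      have main : ∀ f g : ℕ → A, (∀ i < k, f i = g i) →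
          (fun (u : ℕ → B) (i : Fin (k + 1)) => u (i : ℕ)) '' T f ⊆
            (fun (u : ℕ → B) (i : Fin (k + 1)) => u (i : ℕ)) '' T g := by
        rintro f g hag _ ⟨u, hu, rfl⟩
        obtain ⟨v, hv, hd⟩ := exists_close hne hcomp hb f g u hu
        have hdk : dist u v < (1 / 2 : ℝ) ^ k := by
          calc dist u v ≤ l * dist f g := hd
          _ ≤ l * (1 / 2 : ℝ) ^ k :=
            mul_le_mul_of_nonneg_left (stream_dist_le_pow.2 hag) hl0.le
          _ < 1 * (1 / 2 : ℝ) ^ k := by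
            apply mul_lt_mul_of_pos_right hl1 (by positivity)
          _ = (1 / 2 : ℝ) ^ k := one_mul _
        refine ⟨v, hv, funext fun i => ?_⟩
        exact (stream_apply_eq_of_dist_lt hdk (by omega : (i : ℕ) ≤ k)).symm
      exact Set.Subset.antisymm (main f g hagree)
        (main g f fun i hi => (hagree i hi).symm)
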